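/- Let A ∈ ℝ^{n×n}, t ≥ 0, and b_c, b_Δ ∈ ℝ^n with (b_Δ)_i ≥ 0 for all i; let |A| be the entrywise absolute value of A. Suppose V ∈ ℝ^{n×ξ}, H ∈ ℝ^{ξ×ξ} and ε ≥ 0 satisfy ‖exp(A t) b_c − ‖b_c‖ V exp(H t) e₁‖ ≤ ‖b_c‖ ε t, and V̄ ∈ ℝ^{n×ξ}, H̄ ∈ ℝ^{ξ×ξ} and ε̄ ≥ 0 satisfy ‖exp(|A| t) b_Δ − ‖b_Δ‖ V̄ exp(H̄ t) e₁‖ ≤ ‖b_Δ‖ ε̄ t. Define μ = ‖b_Δ‖ V̄ exp(H̄ t) e₁ + (‖b_Δ‖ ε̄ t + ‖b_c‖ ε t) · 𝟙 ∈ ℝ^n, where 𝟙 is the all-ones vector. Then for every x ∈ ℝ^n with |x_i − (b_c)_i| ≤ (b_Δ)_i for all i, one has |(exp(A t) x − ‖b_c‖ V exp(H t) e₁)_i| ≤ μ_i for all i. -/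

import Mathlib

open Matrix

/-- Matrix exponential of a real square matrix. -/
noncomputable def mexp {m : ℕ} (A : Matrix (Fin m) (Fin m) ℝ) : Matrix (Fin m) (Fin m) ℝ :=
  NormedSpace.exp A

/-- Euclidean norm of a vector in `ℝ^m`. -/
noncomputable def enorm₂ {m : ℕ} (x : Fin m → ℝ) : ℝ :=
  ‖(WithLp.toLp 2 x : EuclideanSpace ℝ (Fin m))‖

/-- First standard basis vector of `ℝ^ξ`. -/
noncomputable def e1 {ξ : ℕ} [NeZero ξ] : Fin ξ → ℝ := Pi.single 0 1

/-- Entrywise absolute value of a matrix. -/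
def matAbs {m : ℕ} (A : Matrix (Fin m) (Fin m) ℝ) : Matrix (Fin m) (Fin m) ℝ :=
  Matrix.of fun i j => |A i j|

lemma abs_entry_pow_le {m : ℕ} (B : Matrix (Fin m) (Fin m) ℝ) (k : ℕ) (i j : Fin m) :
    |(B ^ k) i j| ≤ (matAbs B ^ k) i j ∧ 0 ≤ (matAbs B ^ k) i j := by
  induction k generalizing i j with
  | zero => by_cases h : i = j <;> simp [pow_zero, Matrix.one_apply, h]
  | succ k ih =>
    rw [pow_succ, pow_succ]
    constructor
    · calc |(B ^ k * B) i j| = |∑ l, (B ^ k) i l * B l j| := by rw [Matrix.mul_apply]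
        _ ≤ ∑ l, |(B ^ k) i l * B l j| := Finset.abs_sum_le_sum_abs _ _
        _ ≤ ∑ l, (matAbs B ^ k) i l * matAbs B l j := by
            refine Finset.sum_le_sum fun l _ => ?_
            rw [abs_mul]
            exact mul_le_mul (ih i l).1 (le_of_eq rfl) (abs_nonneg _) (ih i l).2
        _ = (matAbs B ^ k * matAbs B) i j := (Matrix.mul_apply).symm
    · rw [Matrix.mul_apply]
      exact Finset.sum_nonneg fun l _ => mul_nonneg (ih i l).2 (abs_nonneg _)

lemma mexp_entry_hasSum {m : ℕ} (B : Matrix (Fin m) (Fin m) ℝ) (i j : Fin m) :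
    HasSum (fun k : ℕ => ((Nat.factorial k : ℝ))⁻¹ * (B ^ k) i j) (mexp B i j) := by
  have hcont : Continuous fun M : Matrix (Fin m) (Fin m) ℝ => M i j :=
    (continuous_apply j).comp (continuous_apply i)
  letI : NormedRing (Matrix (Fin m) (Fin m) ℝ) := Matrix.linftyOpNormedRing
  letI : NormedAlgebra ℝ (Matrix (Fin m) (Fin m) ℝ) := Matrix.linftyOpNormedAlgebra
  have h : HasSum (fun k : ℕ => ((Nat.factorial k : ℝ))⁻¹ • B ^ k) (NormedSpace.exp B) := by
    exact NormedSpace.exp_series_hasSum_exp' (𝕂 := ℝ) B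
  have hmap := h.map ((LinearMap.proj j).comp (LinearMap.proj i :
      Matrix (Fin m) (Fin m) ℝ →ₗ[ℝ] (Fin m → ℝ))) hcont
  exact hmap

lemma mexp_entry_abs_le {m : ℕ} (B : Matrix (Fin m) (Fin m) ℝ) (i j : Fin m) :
    |mexp B i j| ≤ mexp (matAbs B) i j := by
  have hf := mexp_entry_hasSum B i j
  have hg := mexp_entry_hasSum (matAbs B) i j
  have hbound : ∀ k : ℕ, |((Nat.factorial k : ℝ))⁻¹ * (B ^ k) i j|
      ≤ ((Nat.factorial k : ℝ))⁻¹ * ((matAbs B) ^ k) i j := fun k => by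
    rw [abs_mul, abs_of_nonneg (by positivity : (0:ℝ) ≤ ((Nat.factorial k : ℝ))⁻¹)]
    exact mul_le_mul_of_nonneg_left (abs_entry_pow_le B k i j).1 (by positivity)
  have h1 : mexp B i j ≤ mexp (matAbs B) i j :=
    hasSum_le (fun k => (le_abs_self _).trans (hbound k)) hf hg
  have h2 : -(mexp (matAbs B) i j) ≤ mexp B i j := by
    refine hasSum_le (fun k => ?_) hg.neg hf
    have := (abs_le.mp (hbound k)).1
    simpa using this
  exact abs_le.mpr ⟨by linarith, h1⟩

lemma abs_le_enorm {m : ℕ} (v : Fin m → ℝ) (i : Fin m) : |v i| ≤ enorm₂ v := by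
  have := EuclideanSpace.norm_eq (𝕜 := ℝ) (WithLp.toLp 2 v)
  rw [enorm₂, this]
  rw [show |v i| = Real.sqrt (‖v i‖^2) by rw [Real.sqrt_sq_eq_abs]; simp]
  refine Real.sqrt_le_sqrt ?_
  exact Finset.single_le_sum (f := fun l => ‖v l‖ ^ 2) (fun l _ => sq_nonneg _) (Finset.mem_univ i)

/-- Interval vector multiplication in the Krylov subspace:
for every `x` in the box `[b_c − b_Δ, b_c + b_Δ]`, the deviation of `exp(A t) x` from
the Krylov approximation `‖b_c‖ V exp(H t) e₁` is componentwise bounded by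
`μ = ‖b_Δ‖ V̄ exp(H̄ t) e₁ + (‖b_Δ‖ ε̄ t + ‖b_c‖ ε t) 𝟙`. -/
theorem stmt4 {n ξ : ℕ} [NeZero ξ]
    (A : Matrix (Fin n) (Fin n) ℝ) (t : ℝ) (ht : 0 ≤ t)
    (bc bΔ : Fin n → ℝ) (hbΔ : ∀ i, 0 ≤ bΔ i)
    (V : Matrix (Fin n) (Fin ξ) ℝ) (H : Matrix (Fin ξ) (Fin ξ) ℝ) (ε : ℝ) (hε : 0 ≤ ε)
    (Vbar : Matrix (Fin n) (Fin ξ) ℝ) (Hbar : Matrix (Fin ξ) (Fin ξ) ℝ)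
    (εbar : ℝ) (hεbar : 0 ≤ εbar)
    (hc : enorm₂ (mexp (t • A) *ᵥ bc - enorm₂ bc • (V *ᵥ (mexp (t • H) *ᵥ e1)))
        ≤ enorm₂ bc * ε * t)
    (hΔ : enorm₂ (mexp (t • matAbs A) *ᵥ bΔ
          - enorm₂ bΔ • (Vbar *ᵥ (mexp (t • Hbar) *ᵥ e1)))
        ≤ enorm₂ bΔ * εbar * t)
    (μ : Fin n → ℝ)
    (hμ : μ = enorm₂ bΔ • (Vbar *ᵥ (mexp (t • Hbar) *ᵥ e1))
        + (enorm₂ bΔ * εbar * t + enorm₂ bc * ε * t) • (fun _ => (1 : ℝ)))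
    (x : Fin n → ℝ) (hx : ∀ i, |x i - bc i| ≤ bΔ i) :
    ∀ i, |(mexp (t • A) *ᵥ x - enorm₂ bc • (V *ᵥ (mexp (t • H) *ᵥ e1))) i| ≤ μ i := by
  intro i
  set c : Fin n → ℝ := enorm₂ bc • (V *ᵥ (mexp (t • H) *ᵥ e1)) with hc'
  set w : Fin n → ℝ := enorm₂ bΔ • (Vbar *ᵥ (mexp (t • Hbar) *ᵥ e1)) with hw'
  have habs : t • matAbs A = matAbs (t • A) := by
    ext a b
    simp [matAbs, abs_mul, abs_of_nonneg ht, Matrix.smul_apply, smul_eq_mul]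
  -- entrywise bound on exp(tA)
  have hEbar : ∀ a b, |mexp (t • A) a b| ≤ mexp (t • matAbs A) a b := fun a b => by
    rw [habs]; exact mexp_entry_abs_le _ a b
  -- term 1
  have h1 : |(mexp (t • A) *ᵥ (x - bc)) i| ≤ (mexp (t • matAbs A) *ᵥ bΔ) i := by
    rw [Matrix.mulVec, Matrix.mulVec]
    calc |dotProduct (mexp (t • A) i) (x - bc)|
        = |∑ l, mexp (t • A) i l * (x - bc) l| := by rw [dotProduct]
      _ ≤ ∑ l, |mexp (t • A) i l * (x - bc) l| := Finset.abs_sum_le_sum_abs _ _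
      _ ≤ ∑ l, mexp (t • matAbs A) i l * bΔ l := by
          refine Finset.sum_le_sum fun l _ => ?_
          rw [abs_mul]
          have h0 : (0:ℝ) ≤ mexp (t • matAbs A) i l := (abs_nonneg _).trans (hEbar i l)
          refine mul_le_mul (hEbar i l) ?_ (abs_nonneg _) h0
          simpa using hx l
      _ = _ := rfl
  -- term 1 continued: bound exp(t|A|) bΔ by w + ‖bΔ‖ ε̄ t
  have h2 : (mexp (t • matAbs A) *ᵥ bΔ) i ≤ w i + enorm₂ bΔ * εbar * t := by
    have := (abs_le_enorm (mexp (t • matAbs A) *ᵥ bΔ - w) i).trans hΔ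
    have h2' : (mexp (t • matAbs A) *ᵥ bΔ) i - w i ≤ enorm₂ bΔ * εbar * t := by
      simpa [Pi.sub_apply] using (abs_le.mp this).2
    linarith
  -- term 2
  have h3 : |(mexp (t • A) *ᵥ bc - c) i| ≤ enorm₂ bc * ε * t :=
    (abs_le_enorm _ i).trans hc
  have key : (mexp (t • A) *ᵥ x - c) i
      = (mexp (t • A) *ᵥ (x - bc)) i + (mexp (t • A) *ᵥ bc - c) i := by
    simp only [Matrix.mulVec_sub, Pi.sub_apply]
    ring
  rw [key, hμ]
  have := abs_add_le ((mexp (t • A) *ᵥ (x - bc)) i) ((mexp (t • A) *ᵥ bc - c) i)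
  have h4 := (abs_le.mp h3)
  simp only [Pi.add_apply, Pi.smul_apply, smul_eq_mul]
  calc |(mexp (t • A) *ᵥ (x - bc)) i + (mexp (t • A) *ᵥ bc - c) i|
      ≤ |(mexp (t • A) *ᵥ (x - bc)) i| + |(mexp (t • A) *ᵥ bc - c) i| := abs_add_le _ _
    _ ≤ (w i + enorm₂ bΔ * εbar * t) + enorm₂ bc * ε * t := by
        have := h1.trans h2; linarith [h4.2]
    _ = w i + (enorm₂ bΔ * εbar * t + enorm₂ bc * ε * t) * 1 := by ring
    _ = _ := by simp [hw']
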